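/- For any natural number k ≥ 1 and any ε ≥ 0, if χ²_k denotes a chi-square random variable with k degrees of freedom, then P(χ²_k ≥ k(1+ε)) ≥ (1/(3√k·ε + 6))·exp(−kε/2). -/

import Mathlib

open MeasureTheory ProbabilityTheory Real

noncomputable def chiSq (k : ℕ) : Measure ℝ := gammaMeasure ((k : ℝ) / 2) (1 / 2)

open Filter Set Stirling Topology Nat

set_option maxHeartbeats 1600000


lemma sqrtpi_le_stirlingSeq (n : ℕ) (hn : 1 ≤ n) : Real.sqrt π ≤ stirlingSeq n := by
  obtain ⟨m, rfl⟩ := Nat.exists_eq_add_of_le hn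
  have h1 : Tendsto (stirlingSeq ∘ Nat.succ) atTop (𝓝 (Real.sqrt π)) :=
    tendsto_stirlingSeq_sqrt_pi.comp (tendsto_add_atTop_nat 1)
  simpa [Nat.add_comm] using stirlingSeq'_antitone.le_of_tendsto h1 m

lemma stirlingSeq_le (n : ℕ) (hn : 1 ≤ n) : stirlingSeq n ≤ Real.exp 1 / Real.sqrt 2 := by
  obtain ⟨m, rfl⟩ := Nat.exists_eq_add_of_le hn
  have := stirlingSeq'_antitone (Nat.zero_le m)
  simpa [stirlingSeq_one, Nat.add_comm] using this

lemma sdenom_pos (n : ℕ) (hn : 1 ≤ n) :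
    0 < Real.sqrt (2 * n) * ((n : ℝ) / Real.exp 1) ^ n := by
  have h0 : (0:ℝ) < n := by exact_mod_cast hn
  positivity

lemma fact_le_stirling (n : ℕ) (hn : 1 ≤ n) :
    (n ! : ℝ) ≤ (Real.exp 1 / Real.sqrt 2) * (Real.sqrt (2 * n) * ((n : ℝ) / Real.exp 1) ^ n) := by
  have hd := sdenom_pos n hn
  have := stirlingSeq_le n hn
  rw [stirlingSeq, div_le_iff₀ hd] at this
  linarith

lemma stirling_le_fact (n : ℕ) (hn : 1 ≤ n) :
    Real.sqrt π * (Real.sqrt (2 * n) * ((n : ℝ) / Real.exp 1) ^ n) ≤ (n ! : ℝ) := by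
  have hd := sdenom_pos n hn
  have := sqrtpi_le_stirlingSeq n hn
  rw [stirlingSeq, le_div_iff₀ hd] at this
  linarith

lemma Gamma_half (m : ℕ) :
    Real.Gamma ((m : ℝ) + 1/2) * (4 ^ m * m !) = Real.sqrt π * (2 * m)! := by
  induction m with
  | zero =>
      rw [show ((0:ℕ):ℝ) + 1/2 = 1/2 by norm_num, Real.Gamma_one_half_eq]
      simp
  | succ m ih =>
      have h1 : ((m : ℝ) + 1) + 1/2 = ((m : ℝ) + 1/2) + 1 := by ring
      have h2 : Real.Gamma (((m:ℝ) + 1/2) + 1) = ((m:ℝ)+1/2) * Real.Gamma ((m:ℝ)+1/2) :=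
        Real.Gamma_add_one (by positivity)
      push_cast
      rw [h1, h2]
      have h3 : 2 * (m + 1) = (2 * m + 1) + 1 := by ring
      rw [h3, Nat.factorial_succ, Nat.factorial_succ, Nat.factorial_succ, pow_succ]
      push_cast
      linear_combination (4*((m:ℝ)+1)*((m:ℝ)+1/2)) * ih

lemma exp1_lt : Real.exp 1 < 2.71829 := lt_trans Real.exp_one_lt_d9 (by norm_num)
lemma sqrt2_gt : (1.414:ℝ) < Real.sqrt 2 := by
  nlinarith [Real.sq_sqrt (show (0:ℝ) ≤ 2 by norm_num), Real.sqrt_nonneg 2]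
lemma sqrt2_lt : Real.sqrt 2 < 1.41422 := by
  nlinarith [Real.sq_sqrt (show (0:ℝ) ≤ 2 by norm_num), Real.sqrt_nonneg 2]
lemma exp_half_lt : Real.exp (1/2) < 1.64888 := by
  have h : Real.exp (1/2) ^ 2 = Real.exp 1 := by
    rw [← Real.exp_nat_mul]; norm_num
  nlinarith [exp1_lt, Real.exp_pos (1/2:ℝ)]
lemma exp_neg_half_gt : (0.6064:ℝ) < Real.exp (-(1/2)) := by
  rw [Real.exp_neg]
  rw [lt_inv_comm₀ (by norm_num) (Real.exp_pos _)]
  calc Real.exp (1/2) < 1.64888 := exp_half_lt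
    _ ≤ 0.6064⁻¹ := by norm_num
lemma sqrtpi_lt : Real.sqrt π < 1.7725 := by
  nlinarith [Real.sq_sqrt Real.pi_nonneg, Real.sqrt_nonneg π, Real.pi_lt_d6]
lemma sqrtpi_pos : (0:ℝ) < Real.sqrt π := Real.sqrt_pos.mpr Real.pi_pos

lemma Sbound_even (n : ℕ) :
    23/100 * Real.sqrt (2*((n:ℝ)+1)) * (n ! : ℝ) ≤ ((n:ℝ)+1)^(n+1) * Real.exp (-((n:ℝ)+1)) := by
  have hf := fact_le_stirling (n+1) (by omega)
  have hcast : ((n+1)! : ℝ) = ((n:ℝ)+1) * (n ! : ℝ) := by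
    rw [Nat.factorial_succ]; push_cast; ring
  rw [hcast] at hf
  push_cast at hf
  set s := Real.sqrt (2*((n:ℝ)+1)) with hs
  set E := Real.exp 1 with hE
  set R := Real.sqrt 2 with hR
  have hs2 : s * s = 2*((n:ℝ)+1) := Real.mul_self_sqrt (by positivity)
  have hP : (((n:ℝ)+1) / E) ^ (n+1) = ((n:ℝ)+1)^(n+1) * Real.exp (-((n:ℝ)+1)) := by
    rw [div_pow, Real.exp_neg, ← Real.exp_nat_mul]
    push_cast
    rw [mul_one, div_eq_mul_inv]
  have hRpos : (0:ℝ) < R := by rw [hR]; positivity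
  have hER : E / R ≤ 1.93 := by
    rw [div_le_iff₀ hRpos]
    nlinarith [exp1_lt, sqrt2_gt]
  have hspos : 0 ≤ s := Real.sqrt_nonneg _
  have hAX : (0:ℝ) < ((n:ℝ)+1)^(n+1) * Real.exp (-((n:ℝ)+1)) := by positivity
  have hfpos : (0:ℝ) ≤ (n ! : ℝ) := by positivity
  rw [hP] at hf
  have key := mul_le_mul_of_nonneg_left hf (show (0:ℝ) ≤ 23/100 * s by positivity)
  have hn1 : (0:ℝ) < (n:ℝ)+1 := by positivity
  rw [show (23/100 * s * (((n:ℝ)+1) * ↑n !)) = ((n:ℝ)+1) * (23/100*s*(n ! : ℝ)) by ring] at key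
  have hEnonneg : 0 ≤ E / R := by positivity
  nlinarith [key, hs2, hAX, mul_le_mul_of_nonneg_right hER (le_of_lt hAX), hn1]


-- Gamma bound, odd case m ≥ 1 : Γ(m+1/2) ≤ e * m^m * exp(-m)
lemma Gamma_half_le (m : ℕ) (hm : 1 ≤ m) :
    Real.Gamma ((m : ℝ) + 1/2) ≤ Real.exp 1 * (m:ℝ)^m / Real.exp m := by
  have hmR : (1:ℝ) ≤ (m:ℝ) := by exact_mod_cast hm
  set E := Real.exp 1 with hE
  set R := Real.sqrt 2 with hR
  set Em := Real.exp (m:ℝ) with hEm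
  set Q := (m:ℝ)^m with hQ
  set sqm := Real.sqrt (m:ℝ) with hsqm
  have hRpos : (0:ℝ) < R := by rw [hR]; positivity
  have hR2 : R^2 = 2 := Real.sq_sqrt (by norm_num)
  have hsqm_pos : (0:ℝ) < sqm := Real.sqrt_pos.mpr (by linarith)
  have hsqm2 : sqm^2 = (m:ℝ) := Real.sq_sqrt (by linarith)
  have hEpos : (0:ℝ) < E := Real.exp_pos 1
  have hEmpos : (0:ℝ) < Em := Real.exp_pos _
  have hQpos : (0:ℝ) < Q := by rw [hQ]; positivity
  have hEmE : Em = E ^ m := by rw [hEm, hE, ← Real.exp_nat_mul, mul_one]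
  -- (2m)! upper bound
  have h2m := fact_le_stirling (2*m) (by omega)
  have hsq4 : Real.sqrt (2*(2*(m:ℝ))) = 2 * sqm := by
    rw [show 2*(2*(m:ℝ)) = (2)^2 * m by ring, Real.sqrt_mul (by positivity), Real.sqrt_sq (by norm_num)]
  have hpow2m : ((2*(m:ℝ)) / E) ^ (2*m) = 4^m * Q^2 / Em^2 := by
    rw [div_pow, hQ, hEmE]; ring_nf
    congr 1
    rw [mul_comm m 2, pow_mul]; norm_num
  push_cast at h2m
  rw [hsq4, hpow2m] at h2m
  -- m! lower bound
  have hm' := stirling_le_fact m hm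
  have hsq2m : Real.sqrt (2*(m:ℝ)) = R * sqm := by
    rw [Real.sqrt_mul (by norm_num)]
  have hpowm : ((m:ℝ) / E) ^ m = Q / Em := by
    rw [div_pow, hEmE]
  rw [hsq2m, hpowm] at hm'
  -- Gamma as quotient
  have hfac_pos : (0:ℝ) < (4:ℝ)^m * (m ! : ℝ) := by positivity
  have hGamma : Real.Gamma ((m:ℝ) + 1/2) = Real.sqrt π * ((2*m)! : ℝ) / (4^m * (m ! : ℝ)) := by
    rw [eq_div_iff (ne_of_gt hfac_pos)]
    exact_mod_cast Gamma_half m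
  rw [hGamma]
  have hERhalf : E / R = E * R / 2 := by
    rw [div_eq_div_iff (ne_of_gt hRpos) (by norm_num : (2:ℝ) ≠ 0)]
    linear_combination (-E) * hR2
  have hnum : Real.sqrt π * ((2*m)! : ℝ) ≤ Real.sqrt π * (E / R * (2*sqm * (4^m * Q^2/Em^2))) :=
    mul_le_mul_of_nonneg_left h2m (Real.sqrt_nonneg _)
  have hden : Real.sqrt π * (R * sqm * (Q/Em)) * 4^m ≤ 4^m * (m ! : ℝ) := by
    have := mul_le_mul_of_nonneg_right hm' (show (0:ℝ) ≤ 4^m by positivity)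
    linarith
  have hdpos : (0:ℝ) < Real.sqrt π * (R * sqm * (Q/Em)) * 4^m := by positivity
  calc Real.sqrt π * ((2*m)! : ℝ) / (4^m * (m ! : ℝ))
      ≤ Real.sqrt π * (E / R * (2*sqm * (4^m * Q^2/Em^2))) / (Real.sqrt π * (R * sqm * (Q/Em)) * 4^m) := by
        apply div_le_div₀ (by positivity) hnum hdpos hden
    _ = E * Q / Em := by
        rw [hERhalf]
        field_simp

lemma rpow_half_split (x : ℝ) (hx : 0 < x) (m : ℕ) :
    x ^ ((m:ℝ) + 1/2) = x ^ m * Real.sqrt x := by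
  rw [Real.rpow_add hx, Real.rpow_natCast, Real.sqrt_eq_rpow]

lemma Sbound_odd (m : ℕ) (hm : 1 ≤ m) :
    23/100 * Real.sqrt (2*(m:ℝ)+1) * Real.Gamma ((m:ℝ) + 1/2) ≤
      ((m:ℝ)+1/2) ^ ((m:ℝ)+1/2) * Real.exp (-((m:ℝ)+1/2)) := by
  have hmR : (1:ℝ) ≤ (m:ℝ) := by exact_mod_cast hm
  have hx : (0:ℝ) < (m:ℝ)+1/2 := by linarith
  set E := Real.exp 1 with hE
  set R := Real.sqrt 2 with hR
  set Em := Real.exp (m:ℝ) with hEm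
  set Q := (m:ℝ)^m with hQ
  set W := ((m:ℝ)+1/2)^m with hW
  set sm := Real.sqrt ((m:ℝ)+1/2) with hsm
  have hQpos : (0:ℝ) < Q := by rw [hQ]; positivity
  have hWQ : (3/2) * Q ≤ W := by
    have h1 : ((m:ℝ)+1/2) = (m:ℝ) * (1 + 1/(2*(m:ℝ))) := by
      field_simp
    have h2 : (1:ℝ) + (m:ℝ) * (1/(2*(m:ℝ))) ≤ (1 + 1/(2*(m:ℝ)))^m := by
      apply one_add_mul_le_pow
      have : (0:ℝ) < 1/(2*(m:ℝ)) := by positivity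
      linarith
    have h3 : (1:ℝ) + (m:ℝ) * (1/(2*(m:ℝ))) = 3/2 := by
      field_simp; ring
    rw [hW, h1, mul_pow, hQ]
    rw [h3] at h2
    nlinarith [h2]
  have hsm_pos : (0:ℝ) < sm := Real.sqrt_pos.mpr hx
  have hEmpos : (0:ℝ) < Em := Real.exp_pos _
  have hsqrt : Real.sqrt (2*(m:ℝ)+1) = R * sm := by
    rw [show 2*(m:ℝ)+1 = 2*((m:ℝ)+1/2) by ring, Real.sqrt_mul (by norm_num : (0:ℝ) ≤ 2)]
  have hexp : Real.exp (-((m:ℝ)+1/2)) = Real.exp (-(1/2)) / Em := by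
    rw [hEm, eq_div_iff (ne_of_gt (Real.exp_pos _)), ← Real.exp_add]
    ring_nf
  have hRE : R * E ≤ 3.8444 := by
    nlinarith [sqrt2_lt, exp1_lt, Real.sqrt_nonneg 2, (Real.exp_pos 1).le,
      mul_pos (sub_pos.mpr sqrt2_lt) (sub_pos.mpr exp1_lt)]
  have key : 23/100 * R * E * Q ≤ W * Real.exp (-(1/2)) := by
    have h1 : 23/100 * (R * E) * Q ≤ 23/100 * 3.8444 * Q := by
      nlinarith [mul_le_mul_of_nonneg_right hRE hQpos.le]
    have h2 : (3/2) * Q * 0.6064 ≤ W * Real.exp (-(1/2)) := by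
      apply mul_le_mul hWQ (le_of_lt exp_neg_half_gt) (by norm_num) (by nlinarith)
    nlinarith [hQpos]
  have hGle := Gamma_half_le m hm
  rw [hsqrt, rpow_half_split _ hx, hexp, ← hsm, ← hW]
  calc 23/100 * (R * sm) * Real.Gamma ((m:ℝ)+1/2)
      ≤ 23/100 * (R * sm) * (E * Q / Em) := by
        apply mul_le_mul_of_nonneg_left hGle (by positivity)
    _ = (23/100 * R * E * Q) * sm / Em := by ring
    _ ≤ (W * Real.exp (-(1/2))) * sm / Em := by
        gcongr
    _ = W * sm * (Real.exp (-(1/2)) / Em) := by ring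

lemma sqrt_half_gt : (0.707:ℝ) < Real.sqrt (1/2) := by
  nlinarith [Real.sq_sqrt (show (0:ℝ) ≤ 1/2 by norm_num), Real.sqrt_nonneg (1/2:ℝ)]

lemma Sbound (k : ℕ) (hk : 1 ≤ k) :
    23/100 * Real.sqrt k * Real.Gamma ((k:ℝ)/2) ≤ ((k:ℝ)/2) ^ ((k:ℝ)/2) * Real.exp (-((k:ℝ)/2)) := by
  rcases Nat.even_or_odd k with ⟨m, hm⟩ | ⟨m, hm⟩
  · -- k = 2m, m ≥ 1
    obtain ⟨n, rfl⟩ : ∃ n, m = n + 1 := ⟨m - 1, by omega⟩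
    subst hm
    have hcast : ((n + 1 + (n + 1) : ℕ) : ℝ) = 2*((n:ℝ)+1) := by push_cast; ring
    rw [hcast]
    have h2 : (2*((n:ℝ)+1))/2 = (n:ℝ)+1 := by ring
    rw [h2]
    have h3 : ((n:ℝ)+1) ^ ((n:ℝ)+1) = ((n:ℝ)+1)^(n+1) := by
      rw [show (n:ℝ)+1 = ((n+1 : ℕ):ℝ) by push_cast; ring, Real.rpow_natCast]
    rw [h3, Real.Gamma_nat_eq_factorial]
    exact Sbound_even n
  · -- k = 2m+1
    subst hm
    have hcast : ((2*m + 1 : ℕ) : ℝ) = 2*(m:ℝ)+1 := by push_cast; ring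
    rw [hcast]
    have h2 : (2*(m:ℝ)+1)/2 = (m:ℝ)+1/2 := by ring
    rw [h2]
    rcases Nat.eq_zero_or_pos m with rfl | hm
    · -- k = 1
      push_cast
      rw [show (0:ℝ)+1/2 = 1/2 by norm_num, show 2*(0:ℝ)+1 = 1 by norm_num,
        Real.Gamma_one_half_eq, Real.sqrt_one, ← Real.sqrt_eq_rpow]
      nlinarith [sqrtpi_lt, sqrt_half_gt, exp_neg_half_gt, Real.sqrt_nonneg π,
        Real.sqrt_nonneg (1/2:ℝ), Real.exp_pos (-(1/2):ℝ)]
    · exact Sbound_odd m hm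


theorem chiSq_upper_tail_lower_bound (k : ℕ) (hk : 1 ≤ k) (ε : ℝ) (hε : 0 ≤ ε) :
    chiSq k {x | (k : ℝ) * (1 + ε) ≤ x} ≥
      ENNReal.ofReal ((1 / (3 * Real.sqrt k * ε + 6)) * Real.exp (-(k : ℝ) * ε / 2)) := by
  have hkR : (1:ℝ) ≤ (k:ℝ) := by exact_mod_cast hk
  set a : ℝ := (k:ℝ)/2 with ha
  have ha0 : 0 < a := by rw [ha]; linarith
  set t : ℝ := (k:ℝ)*(1+ε) with hts
  have hkt : (k:ℝ) ≤ t := by rw [hts]; nlinarith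
  have ht0 : 0 < t := by linarith
  set s : ℝ := Real.sqrt (2*(k:ℝ)-4) with hss
  have hs0 : 0 ≤ s := Real.sqrt_nonneg _
  have hs2 : 2*(k:ℝ)-4 ≤ s^2 := by
    rcases le_or_gt (2*(k:ℝ)-4) 0 with h | h
    · nlinarith [sq_nonneg s]
    · rw [hss, Real.sq_sqrt h.le]
  set c₀ : ℝ := 2 + s - (k:ℝ) with hc₀
  have hD : ∀ x : ℝ, t ≤ x → 0 < x + c₀ := fun x hx => by
    rw [hc₀]; nlinarith
  have hDt : t + c₀ = (k:ℝ)*ε + 2 + s := by rw [hc₀, hts]; ring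
  set C : ℝ := (1/2:ℝ)^a / Real.Gamma a with hCs
  have hGammaPos : 0 < Real.Gamma a := Real.Gamma_pos_of_pos ha0
  have hC : 0 < C := by
    rw [hCs]
    have : (0:ℝ) < (1/2:ℝ)^a := Real.rpow_pos_of_pos (by norm_num) a
    positivity
  set G : ℝ → ℝ := fun x => 2*C*((x^a * Real.exp (-(1/2*x))) / (x + c₀)) with hGs
  set G' : ℝ → ℝ := fun x =>
    2*C*(Real.exp (-(1/2*x)) * ((a*x^(a-1) - x^a*(1/2))*(x+c₀) - x^a) / (x+c₀)^2) with hG's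
  -- key pointwise algebra
  have hcore : ∀ x : ℝ, t ≤ x → 2*x ≤ (2+s)*(x+c₀) := by
    intro x hx
    have hxk : (k:ℝ) ≤ x := le_trans hkt hx
    rw [hc₀]
    nlinarith [mul_nonneg hs0 (sub_nonneg.mpr hxk)]
  have hderiv : ∀ x ∈ Ici t, HasDerivAt G (G' x) x := by
    intro x hx
    have hx0 : 0 < x := lt_of_lt_of_le ht0 hx
    have hxc : x + c₀ ≠ 0 := ne_of_gt (hD x hx)
    have h1 : HasDerivAt (fun y : ℝ => y^a) (a*x^(a-1)) x :=
      Real.hasDerivAt_rpow_const (Or.inl (ne_of_gt hx0))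
    have h2 : HasDerivAt (fun y : ℝ => Real.exp (-(1/2*y))) (Real.exp (-(1/2*x)) * (-(1/2))) x := by
      have h2a : HasDerivAt (fun y : ℝ => -(1/2*y)) (-(1/2)) x := by
        have := ((hasDerivAt_id x).const_mul (1/2:ℝ)).neg
        simp only [id, mul_one] at this
        exact this
      exact h2a.exp
    have h3 : HasDerivAt (fun y : ℝ => y + c₀) 1 x := (hasDerivAt_id x).add_const c₀
    have h4 := ((h1.mul h2).div h3 hxc).const_mul (2*C)
    refine h4.congr_deriv ?_
    rw [hG's]
    simp only [Pi.mul_apply]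
    field_simp
    ring
  have hnonneg : ∀ x ∈ Ioi t, 0 ≤ -G' x := by
    intro x hx
    have hx' : t ≤ x := le_of_lt hx
    have hx0 : 0 < x := lt_of_lt_of_le ht0 hx'
    have hxk : (k:ℝ) ≤ x := le_trans hkt hx'
    have hDx : 0 < x + c₀ := hD x hx'
    have hpow : x^a = x^(a-1)*x := by
      rw [← Real.rpow_add_one (ne_of_gt hx0) (a-1)]
      norm_num
    have hxa1 : 0 ≤ x^(a-1) := Real.rpow_nonneg hx0.le _
    rw [hG's]
    simp only
    have hnum : 0 ≤ -((a*x^(a-1) - x^a*(1/2))*(x+c₀) - x^a) := by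
      have hrw : -((a*x^(a-1) - x^a*(1/2))*(x+c₀) - x^a)
          = x^(a-1)/2 * (2*x + (x - (k:ℝ))*(x+c₀)) := by
        rw [hpow, ha]; ring
      rw [hrw]
      have : 0 ≤ 2*x + (x - (k:ℝ))*(x+c₀) := by nlinarith
      positivity
    have hexp0 : 0 ≤ Real.exp (-(1/2*x)) := (Real.exp_pos _).le
    rw [show -(2*C*(Real.exp (-(1/2*x)) * ((a*x^(a-1) - x^a*(1/2))*(x+c₀) - x^a) / (x+c₀)^2))
        = 2*C*(Real.exp (-(1/2*x)) * (-((a*x^(a-1) - x^a*(1/2))*(x+c₀) - x^a)) / (x+c₀)^2) from by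
      ring]
    exact mul_nonneg (by linarith) (div_nonneg (mul_nonneg hexp0 hnum) (sq_nonneg _))
  have hcomp : ∀ x ∈ Ioi t, -G' x ≤ gammaPDFReal a (1/2) x := by
    intro x hx
    have hx' : t ≤ x := le_of_lt hx
    have hx0 : 0 < x := lt_of_lt_of_le ht0 hx'
    have hDx : 0 < x + c₀ := hD x hx'
    have hpow : x^a = x^(a-1)*x := by
      rw [← Real.rpow_add_one (ne_of_gt hx0) (a-1)]
      norm_num
    have hxa1 : 0 ≤ x^(a-1) := Real.rpow_nonneg hx0.le _
    have hGx : -G' x = C * Real.exp (-(1/2*x)) * x^(a-1) *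
        ((2*x + (x-(k:ℝ))*(x+c₀))/(x+c₀)^2) := by
      rw [hG's]
      simp only
      rw [hpow, show (k:ℝ) = 2*a by rw [ha]; ring]
      field_simp
      ring
    have hpdf : gammaPDFReal a (1/2) x = C * Real.exp (-(1/2*x)) * x^(a-1) := by
      rw [gammaPDFReal, if_pos hx0.le, hCs]
      ring
    have hq : 2*x + (x-(k:ℝ))*(x+c₀) ≤ (x+c₀)^2 := by
      nlinarith [hcore x hx']
    have h1 : (2*x + (x-(k:ℝ))*(x+c₀))/(x+c₀)^2 ≤ 1 := by
      rw [div_le_one (by positivity)]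
      exact hq
    rw [hGx, hpdf]
    have hCE : 0 ≤ C * Real.exp (-(1/2*x)) * x^(a-1) :=
      mul_nonneg (mul_nonneg hC.le (Real.exp_pos _).le) hxa1
    have h2 := mul_le_mul_of_nonneg_left h1 hCE
    rw [mul_one] at h2
    linarith
  have htend : Tendsto G atTop (𝓝 (0:ℝ)) := by
    have h1 : Tendsto (fun x : ℝ => x^a * Real.exp (-(1/2) * x)) atTop (𝓝 0) :=
      tendsto_rpow_mul_exp_neg_mul_atTop_nhds_zero a (1/2) (by norm_num)
    have h2 : Tendsto (fun x : ℝ => (x + c₀)⁻¹) atTop (𝓝 0) :=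
      tendsto_inv_atTop_zero.comp (tendsto_atTop_add_const_right _ c₀ tendsto_id)
    have h3 := (h1.mul h2).const_mul (2*C)
    simp only [mul_zero, zero_mul] at h3
    apply h3.congr
    intro x
    rw [hGs]
    simp only
    rw [neg_mul, div_eq_mul_inv]
    try rfl
  have hderivneg : ∀ x ∈ Ici t, HasDerivAt (fun y => -G y) (-G' x) x :=
    fun x hx => (hderiv x hx).neg
  have htendneg : Tendsto (fun y => -G y) atTop (𝓝 (-0:ℝ)) := htend.neg
  rw [neg_zero] at htendneg
  have hint : IntegrableOn (fun x => -G' x) (Ioi t) volume :=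
    integrableOn_Ioi_deriv_of_nonneg' hderivneg hnonneg htendneg
  have hval : ∫ x in Ioi t, -G' x = G t := by
    have := integral_Ioi_of_hasDerivAt_of_nonneg' hderivneg hnonneg htendneg
    simpa using this
  have hfinal : 1/(3*Real.sqrt k*ε+6) * Real.exp (-(k:ℝ)*ε/2) ≤ G t := by
    set u : ℝ := Real.sqrt (k:ℝ) with hu
    have hu0 : 0 < u := Real.sqrt_pos.mpr (by linarith)
    have hu2 : u^2 = (k:ℝ) := Real.sq_sqrt (by linarith)
    have hu1 : 1 ≤ u := by nlinarith
    have hden1 : (0:ℝ) < 3*u*ε+6 := by nlinarith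
    have hdenpos : 0 < (k:ℝ)*ε+2+s := by nlinarith
    have hta : t^a = (k:ℝ)^a * (1+ε)^a := by
      rw [hts]; exact Real.mul_rpow (by linarith) (by linarith)
    have hhalfk : ((1:ℝ)/2)^a * (k:ℝ)^a = ((k:ℝ)/2)^a := by
      rw [← Real.mul_rpow (by norm_num) (by linarith)]
      congr 1
      ring
    have hexpsplit : Real.exp (-(1/2*t)) = Real.exp (-((k:ℝ)/2)) * Real.exp (-(k:ℝ)*ε/2) := by
      rw [← Real.exp_add]
      congr 1
      rw [hts]; ring
    have hGt : G t = 2*(((k:ℝ)/2)^a*Real.exp (-((k:ℝ)/2)))*(1+ε)^a*Real.exp (-(k:ℝ)*ε/2) /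
        (Real.Gamma a*((k:ℝ)*ε+2+s)) := by
      rw [hGs]
      simp only
      rw [hta, hexpsplit, hDt, hCs, ← hhalfk]
      field_simp
    have hone : (1:ℝ) ≤ (1+ε)^a :=
      le_trans (le_of_eq (Real.one_rpow a).symm)
        (Real.rpow_le_rpow (by norm_num) (by linarith) ha0.le)
    have hSb := Sbound k hk
    rw [← hu, ← ha] at hSb
    have hs_le : s ≤ 1.41422*u := by
      have h1 : s ≤ Real.sqrt (2*(k:ℝ)) := by
        rw [hss]
        exact Real.sqrt_le_sqrt (by linarith)
      have h2 : Real.sqrt (2*(k:ℝ)) = Real.sqrt 2 * u := by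
        rw [hu]; exact Real.sqrt_mul (by norm_num) _
      nlinarith [sqrt2_lt, hu0, Real.sqrt_nonneg (2:ℝ)]
    have hstar : (k:ℝ)*ε+2+s ≤ 46/100*u*(1+ε)^a*(3*u*ε+6) := by
      rcases (show k = 1 ∨ k = 2 ∨ 3 ≤ k by omega) with hk1 | hk2 | hk3
      · have hkR1 : (k:ℝ) = 1 := by rw [hk1]; norm_num
        have hse : s = 0 := by
          rw [hss, hkR1]
          rw [show 2*(1:ℝ)-4 = -2 by norm_num]
          exact Real.sqrt_eq_zero'.mpr (by norm_num)
        have hue : u = 1 := by rw [hu, hkR1, Real.sqrt_one]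
        rw [hkR1, hse, hue]
        have hfac : (0:ℝ) ≤ 46/100*(3*ε+6) := by linarith
        nlinarith [mul_le_mul_of_nonneg_left hone hfac]
      · have hkR2 : (k:ℝ) = 2 := by rw [hk2]; norm_num
        have hse : s = 0 := by
          rw [hss, hkR2]
          rw [show 2*(2:ℝ)-4 = 0 by norm_num, Real.sqrt_zero]
        have hae : a = 1 := by rw [ha, hkR2]; norm_num
        have hre : (1+ε)^a = 1+ε := by rw [hae, Real.rpow_one]
        have hu14 : 1.414 ≤ u := by nlinarith [hkR2]
        rw [hkR2, hse, hre]
        nlinarith [mul_nonneg (mul_nonneg hu0.le hε) hε, mul_nonneg hu0.le hε]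
      · have hk3R : (3:ℝ) ≤ (k:ℝ) := by exact_mod_cast hk3
        have ha1 : (1:ℝ) ≤ a := by rw [ha]; linarith
        have hber : 1 + a*ε ≤ (1+ε)^a := one_add_mul_self_le_rpow_one_add (by linarith) ha1
        have hu17 : 1.73 ≤ u := by nlinarith
        have hfac : (0:ℝ) ≤ 46/100*u*(3*u*ε+6) := by positivity
        have hm1 := mul_le_mul_of_nonneg_left hber hfac
        have hka : (k:ℝ) = 2*a := by rw [ha]; ring
        rw [hka]
        clear hderiv hnonneg hcomp htend hderivneg htendneg hint hval hcore hD hDt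
          hexpsplit hta hhalfk hfac hber hdenpos hSb hone hu2 hC hCs hGs hG's hts hss hc₀ hu
        nlinarith [hm1, hs_le, hu17, mul_nonneg ha0.le hε,
          mul_nonneg (mul_nonneg hu0.le hu0.le) hε,
          mul_nonneg (mul_nonneg (mul_nonneg ha0.le hu0.le) hu0.le) (mul_nonneg hε hε),
          mul_nonneg (mul_nonneg ha0.le hu0.le) hε]
    have hkey : Real.Gamma a * ((k:ℝ)*ε+2+s) ≤
        2*(((k:ℝ)/2)^a*Real.exp (-((k:ℝ)/2)))*(1+ε)^a*(3*u*ε+6) := by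
      calc Real.Gamma a * ((k:ℝ)*ε+2+s)
          ≤ Real.Gamma a * (46/100*u*(1+ε)^a*(3*u*ε+6)) :=
            mul_le_mul_of_nonneg_left hstar hGammaPos.le
        _ = (23/100*u*Real.Gamma a) * (2*(1+ε)^a*(3*u*ε+6)) := by ring
        _ ≤ (((k:ℝ)/2)^((k:ℝ)/2)*Real.exp (-((k:ℝ)/2))) * (2*(1+ε)^a*(3*u*ε+6)) := by
            apply mul_le_mul_of_nonneg_right hSb
            have : (0:ℝ) ≤ (1+ε)^a := by linarith
            positivity
        _ = 2*(((k:ℝ)/2)^a*Real.exp (-((k:ℝ)/2)))*(1+ε)^a*(3*u*ε+6) := by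
            rw [← ha]; ring
    rw [hGt]
    rw [show (1:ℝ)/(3*u*ε+6) * Real.exp (-(k:ℝ)*ε/2)
        = Real.exp (-(k:ℝ)*ε/2) / (3*u*ε+6) from by ring]
    have hbot : 0 < Real.Gamma a * ((k:ℝ)*ε+2+s) := mul_pos hGammaPos hdenpos
    rw [div_le_div_iff₀ hden1 hbot]
    have h6 := mul_le_mul_of_nonneg_left hkey (Real.exp_pos (-(k:ℝ)*ε/2)).le
    refine le_trans (le_of_eq (by ring)) (le_trans h6 (le_of_eq (by ring)))
  -- measure chain
  have hset : {x : ℝ | t ≤ x} = Ici t := rfl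
  rw [ge_iff_le]
  calc ENNReal.ofReal (1/(3*Real.sqrt k*ε+6) * Real.exp (-(k:ℝ)*ε/2))
      ≤ ENNReal.ofReal (G t) := ENNReal.ofReal_le_ofReal hfinal
    _ = ∫⁻ x in Ioi t, ENNReal.ofReal (-G' x) := by
        rw [← hval]
        exact ofReal_integral_eq_lintegral_ofReal hint
          ((ae_restrict_iff' measurableSet_Ioi).mpr (ae_of_all _ hnonneg))
    _ ≤ ∫⁻ x in Ioi t, gammaPDF a (1/2) x := by
        apply setLIntegral_mono ((measurable_gammaPDFReal a (1/2)).ennreal_ofReal)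
        intro x hx
        exact ENNReal.ofReal_le_ofReal (hcomp x hx)
    _ ≤ ∫⁻ x in Ici t, gammaPDF a (1/2) x := lintegral_mono_set Ioi_subset_Ici_self
    _ = chiSq k {x : ℝ | t ≤ x} := by
        rw [hset, chiSq, gammaMeasure, withDensity_apply _ measurableSet_Ici]
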